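/- For each k ≥ 1 there is a voting rule E that is not a computable function, yet the k-Winner predicate {(C, V, p) : p ∈ E(C, V) and |E(C, V)| ≤ k} is computable. Concretely, for any set L ⊆ ℕ that is not computable, the voting rule defined by E(C, V) = C if |C| ≤ k or |C| ∈ L, and E(C, V) = ∅ otherwise, is not computable (otherwise L would be decidable), while its k-Winner predicate coincides with {(C, V, p) : p ∈ C and |C| ≤ k}, which is computable. -/

import Mathlib

open scoped Classical

namespace UncompKWinnerAux

open Denumerable Encodable

/-- foldl step computing `raise'` in reverse. -/
def rstep : ℕ × List ℕ → ℕ → ℕ × List ℕ := fun p m => (m + p.1 + 1, (m + p.1) :: p.2)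

lemma foldl_rstep (l : List ℕ) : ∀ n acc,
    (l.foldl rstep (n, acc)).2 = (raise' l n).reverse ++ acc := by
  induction l with
  | nil => intro n acc; simp [raise']
  | cons m l ih =>
    intro n acc
    simp only [List.foldl_cons, rstep, raise', List.reverse_cons]
    rw [ih]
    simp

/-- `raise' · 0` written as a fold. -/
def raise'0 : List ℕ → List ℕ := fun l => (l.foldl rstep (0, [])).2.reverse

lemma raise'0_eq (l : List ℕ) : raise'0 l = raise' l 0 := by
  simp [raise'0, foldl_rstep]

lemma primrec_raise'0 : Primrec raise'0 := by
  have h : Primrec₂ (fun (_ : List ℕ) (p : (ℕ × List ℕ) × ℕ) => rstep p.1 p.2) := by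
    have hm : Primrec fun p : List ℕ × ((ℕ × List ℕ) × ℕ) => p.2.2 :=
      Primrec.snd.comp Primrec.snd
    have hs1 : Primrec fun p : List ℕ × ((ℕ × List ℕ) × ℕ) => p.2.1.1 :=
      Primrec.fst.comp (Primrec.fst.comp Primrec.snd)
    have hs2 : Primrec fun p : List ℕ × ((ℕ × List ℕ) × ℕ) => p.2.1.2 :=
      Primrec.snd.comp (Primrec.fst.comp Primrec.snd)
    have hadd : Primrec fun p : List ℕ × ((ℕ × List ℕ) × ℕ) => p.2.2 + p.2.1.1 :=
      Primrec.nat_add.comp hm hs1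
    exact (Primrec.succ.comp hadd).pair (Primrec.list_cons.comp hadd hs2)
  have hf : Primrec fun l : List ℕ => l.foldl (fun s b => rstep s b) ((0 : ℕ), ([] : List ℕ)) :=
    Primrec.list_foldl Primrec.id (Primrec.const _) h
  exact Primrec.list_reverse.comp (Primrec.snd.comp hf)

/-- The encoding of finsets coming from the `Denumerable` instance. -/
def encF : Finset ℕ → ℕ := @encode (Finset ℕ) (Denumerable.finset.toEncodable)

/-- Turn a finset (under the `Denumerable.finset` encoding) into its sorted list. -/
def toL : Finset ℕ → List ℕ := fun s => raise'0 (ofNat (List ℕ) (encF s))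

lemma primrec_toL : Primrec toL :=
  primrec_raise'0.comp ((Primrec.ofNat (List ℕ)).comp (Primrec.encode (α := Finset ℕ)))

lemma ofNat_finset (m : ℕ) : ofNat (Finset ℕ) m = raise'Finset (ofNat (List ℕ) m) 0 := by
  have : ofNat (Finset ℕ) m =
      Finset.map (Equiv.symm (eqv ℕ)).toEmbedding (raise'Finset (ofNat (List ℕ) m) 0) := rfl
  rw [this]
  convert Finset.map_refl using 2
  ext; rfl

lemma length_raise' : ∀ (l : List ℕ) (n : ℕ), (raise' l n).length = l.length
  | [], _ => rfl
  | _ :: l, _ => by simp [raise', length_raise' l]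

lemma mem_raise'Finset (a : ℕ) (l : List ℕ) (n : ℕ) :
    a ∈ raise'Finset l n ↔ a ∈ raise' l n := by
  simp [raise'Finset, Finset.mem_mk]
  exact Iff.rfl

lemma card_raise'Finset (l : List ℕ) (n : ℕ) :
    (raise'Finset l n).card = l.length := by
  simp [raise'Finset, Finset.card_mk, length_raise']
  exact (Multiset.coe_card _).trans (length_raise' l n)

lemma self_eq (s : Finset ℕ) : s = raise'Finset (ofNat (List ℕ) (encF s)) 0 := by
  conv_lhs => rw [← ofNat_encode (α := Finset ℕ) s]
  rw [ofNat_finset]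
  rfl

lemma mem_toL (a : ℕ) (s : Finset ℕ) : a ∈ toL s ↔ a ∈ s := by
  conv_rhs => rw [self_eq s]
  rw [mem_raise'Finset, toL, raise'0_eq]

lemma length_toL (s : Finset ℕ) : (toL s).length = s.card := by
  conv_rhs => rw [self_eq s]
  rw [card_raise'Finset, toL, raise'0_eq, length_raise']

/-- A computable family of finsets of each cardinality. -/
def S : ℕ → Finset ℕ := fun n => ofNat (Finset ℕ) (encode (List.range n))

lemma primrec_S : Primrec S :=
  (Primrec.ofNat (Finset ℕ)).comp (Primrec.encode.comp Primrec.list_range)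

lemma card_S (n : ℕ) : (S n).card = n := by
  rw [S, ofNat_finset, ofNat_encode, card_raise'Finset, List.length_range]

end UncompKWinnerAux

open UncompKWinnerAux

/-- Proposition 5: for each `k ≥ 1` and each noncomputable set `L ⊆ ℕ`,
the voting rule `E` on elections `(C, V)` (with candidates drawn from `ℕ` and votes encoded
as lists) defined by `E (C, V) = C` if `|C| ≤ k` or `|C| ∈ L`, and `E (C, V) = ∅` otherwise,
is not a computable function, yet its `k`-Winner predicate
`{(C, V, p) : p ∈ E (C, V) ∧ |E (C, V)| ≤ k}` is computable. -/
theorem uncomputable_rule_with_computable_k_winner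
    (k : ℕ) (hk : 1 ≤ k) (L : Set ℕ) (hL : ¬ ComputablePred (· ∈ L)) :
    ∃ E : Finset ℕ × List (List ℕ) → Finset ℕ,
      (E = fun e => if e.1.card ≤ k ∨ e.1.card ∈ L then e.1 else ∅) ∧
      (∀ e, E e ⊆ e.1) ∧
      ¬ Computable E ∧
      ComputablePred (fun x : (Finset ℕ × List (List ℕ)) × ℕ =>
        x.2 ∈ E x.1 ∧ (E x.1).card ≤ k) ∧
      (∀ x : (Finset ℕ × List (List ℕ)) × ℕ,
        (x.2 ∈ E x.1 ∧ (E x.1).card ≤ k) ↔ (x.2 ∈ x.1.1 ∧ x.1.1.card ≤ k)) := by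
  set E : Finset ℕ × List (List ℕ) → Finset ℕ :=
    fun e => if e.1.card ≤ k ∨ e.1.card ∈ L then e.1 else ∅ with hEdef
  have hsub : ∀ e, E e ⊆ e.1 := by
    intro e
    rw [hEdef]
    dsimp only
    split
    · exact Finset.Subset.refl _
    · exact Finset.empty_subset _
  have hiff : ∀ x : (Finset ℕ × List (List ℕ)) × ℕ,
      (x.2 ∈ E x.1 ∧ (E x.1).card ≤ k) ↔ (x.2 ∈ x.1.1 ∧ x.1.1.card ≤ k) := by
    intro x
    rw [hEdef]
    dsimp only
    split
    · exact Iff.rfl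
    · next h =>
      push_neg at h
      simp [h.1]
  have hnc : ¬ Computable E := by
    intro hE
    apply hL
    -- decision procedure for `L`
    set fl : List Bool := (List.range (k + 1)).map (fun i => decide (i ∈ L)) with hfl
    set g : ℕ → Bool := fun n =>
      bif decide (n < k + 1) then fl.getD n false
      else decide (0 < (toL (E (S n, []))).length) with hg
    have hgc : Computable g := by
      apply Computable.cond
      · exact (Primrec.nat_lt.comp Primrec.id (Primrec.const (k + 1))).decide.to_comp
      · exact ((Primrec.list_getD false).comp (Primrec.const fl) Primrec.id).to_comp
      · have c1 : Computable fun n : ℕ => (S n, ([] : List (List ℕ))) :=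
          (primrec_S.to_comp).pair (Computable.const [])
        have c2 : Computable fun n : ℕ => (toL (E (S n, []))).length :=
          ((Primrec.list_length.comp primrec_toL).to_comp).comp (hE.comp c1)
        exact ((Primrec.nat_lt.comp (Primrec.const 0) Primrec.id).decide.to_comp).comp c2
    have hgcorr : ∀ n, n ∈ L ↔ g n = true := by
      intro n
      by_cases hn : n < k + 1
      · have hgn : g n = fl.getD n false := by simp [hg, Nat.lt_succ_iff.mp hn]
        rw [hgn, hfl, List.getD_eq_getElem?_getD]
        simp [hn]
      · have hgn : g n = decide (0 < (toL (E (S n, []))).length) := by simp [hg, show ¬ n ≤ k by omega]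
        rw [hgn]
        have hcard : (toL (E (S n, []))).length = (E (S n, [])).card := length_toL _
        have hnk : ¬ n ≤ k := by omega
        have hEn : E (S n, ([] : List (List ℕ))) = if n ∈ L then S n else ∅ := by
          rw [hEdef]
          show (if (S n).card ≤ k ∨ (S n).card ∈ L then S n else ∅) = _
          rw [card_S]
          by_cases hnL : n ∈ L <;> simp [hnL, hnk]
        rw [hcard, hEn]
        by_cases hnL : n ∈ L
        · simp only [hnL, if_true, card_S]
          simp only [hnL, true_iff]
          simp only [decide_eq_true_eq]
          omega
        · simp [hnL]
    rw [ComputablePred.computable_iff]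
    exact ⟨g, hgc, funext fun n => propext (by simpa using hgcorr n)⟩
  have hcpQ : ComputablePred (fun x : (Finset ℕ × List (List ℕ)) × ℕ =>
      x.2 ∈ x.1.1 ∧ x.1.1.card ≤ k) := by
    have hlist : Primrec fun x : (Finset ℕ × List (List ℕ)) × ℕ => toL x.1.1 :=
      primrec_toL.comp (Primrec.fst.comp Primrec.fst)
    have hlen : Primrec fun x : (Finset ℕ × List (List ℕ)) × ℕ => (toL x.1.1).length :=
      Primrec.list_length.comp hlist
    have hidx : Primrec fun x : (Finset ℕ × List (List ℕ)) × ℕ =>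
        (toL x.1.1).idxOf x.2 :=
      Primrec.list_idxOf.comp Primrec.snd hlist
    have hPP : PrimrecPred fun x : (Finset ℕ × List (List ℕ)) × ℕ =>
        (toL x.1.1).idxOf x.2 < (toL x.1.1).length ∧ (toL x.1.1).length ≤ k :=
      PrimrecPred.and (Primrec.nat_lt.comp hidx hlen)
        (Primrec.nat_le.comp hlen (Primrec.const k))
    have hCP : ComputablePred fun x : (Finset ℕ × List (List ℕ)) × ℕ =>
        (toL x.1.1).idxOf x.2 < (toL x.1.1).length ∧ (toL x.1.1).length ≤ k :=
      ⟨inferInstance, hPP.decide.to_comp⟩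
    refine hCP.of_eq fun x => ?_
    have h1 : (toL x.1.1).idxOf x.2 < (toL x.1.1).length ↔ x.2 ∈ x.1.1 := by
      rw [List.idxOf_lt_length_iff, mem_toL]
    rw [h1, length_toL]
  have hcpP : ComputablePred (fun x : (Finset ℕ × List (List ℕ)) × ℕ =>
      x.2 ∈ E x.1 ∧ (E x.1).card ≤ k) :=
    hcpQ.of_eq fun x => (hiff x).symm
  exact ⟨E, hEdef, hsub, hnc, hcpP, hiff⟩
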